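/- For every ε > 0 there exists N such that for all n ≥ N, there exists a valid relaxation sequence for the complete directed graph on n vertices of length at most (1/2 + ε)·n³. -/

import Mathlib

open List

section Aux

variable {α : Type*}

/-- edges of a path -/
def pedges (p : List α) : List (α × α) := p.zip p.tail

@[simp] lemma pedges_nil : pedges ([] : List α) = [] := rfl
@[simp] lemma pedges_single (a : α) : pedges [a] = [] := rfl
@[simp] lemma pedges_cons_cons (a b : α) (t : List α) :
    pedges (a :: b :: t) = (a, b) :: pedges (b :: t) := rfl

lemma pedges_cons (a : α) (l : List α) (h : l ≠ []) :
    pedges (a :: l) = (a, l.head h) :: pedges l := by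
  cases l with
  | nil => simp at h
  | cons b t => rfl

lemma pedges_eq_nil {p : List α} (h : p.length ≤ 1) : pedges p = [] := by
  cases p with
  | nil => rfl
  | cons a t => cases t with
    | nil => rfl
    | cons b t' => simp at h

lemma chain'_rel_pedges {r : α → α → Prop} {p : List α} (h : p.Chain' r) :
    ∀ e ∈ pedges p, r e.1 e.2 := by
  induction p with
  | nil => simp
  | cons a t ih =>
    cases t with
    | nil => simp
    | cons b t' =>
      intro e he
      rw [pedges_cons_cons] at he
      rcases List.mem_cons.1 he with rfl | he
      · exact (isChain_cons_cons.1 h).1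
      · exact ih (isChain_cons_cons.1 h).2 _ he

lemma pairwise_fst_pedges {r : α → α → Prop} [IsTrans α r] {p : List α}
    (h : p.Pairwise r) : (pedges p).Pairwise fun e f => r e.1 f.1 := by
  induction p with
  | nil => simp [pedges]
  | cons a t ih =>
    cases t with
    | nil => simp [pedges]
    | cons b t' =>
      rw [pedges_cons_cons]
      refine Pairwise.cons ?_ (ih h.of_cons)
      intro f hf
      have := (List.of_mem_zip hf).1
      have h1 : ∀ x ∈ b :: t', r a x := fun x hx => (pairwise_cons.1 h).1 x hx
      exact h1 f.1 (by simpa using this)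

lemma pairwise_bind' {β : Type*} {f : α → List β} {r : β → β → Prop} {q : α → α → Prop}
    (L : List α) (h1 : ∀ a ∈ L, (f a).Pairwise r) (h2 : L.Pairwise q)
    (h3 : ∀ a b, q a b → ∀ x ∈ f a, ∀ y ∈ f b, r x y) :
    (L.flatMap f).Pairwise r := by
  induction L with
  | nil => simp
  | cons a t ih =>
    rw [List.flatMap_cons, List.pairwise_append]
    refine ⟨h1 a (mem_cons_self), ih (fun b hb => h1 b (mem_cons_of_mem _ hb)) h2.of_cons, ?_⟩
    intro x hx y hy
    obtain ⟨b, hb, hyb⟩ := List.mem_flatMap.1 hy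
    exact h3 a b ((pairwise_cons.1 h2).1 b hb) x hx y hyb

/-- split off the maximal initial `r`-run; second component starts at the last
vertex of the run. -/
def splitRun (r : α → α → Prop) [DecidableRel r] : List α → List α × List α
  | [] => ([], [])
  | [a] => ([a], [a])
  | a :: b :: t =>
    if r a b then ((a :: (splitRun r (b :: t)).1), (splitRun r (b :: t)).2)
    else ([a], a :: b :: t)

variable (r : α → α → Prop) [DecidableRel r]

lemma splitRun_fst_head : ∀ p : List α, (splitRun r p).1.head? = p.head?
  | [] => rfl
  | [a] => rfl
  | a :: b :: t => by
    rw [splitRun]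
    split <;> simp

lemma splitRun_fst_chain' : ∀ p : List α, (splitRun r p).1.Chain' r
  | [] => isChain_nil
  | [a] => isChain_singleton a
  | a :: b :: t => by
    rw [splitRun]
    split
    · rename_i hr
      refine isChain_cons.2 ⟨?_, splitRun_fst_chain' (b :: t)⟩
      intro y hy
      have := splitRun_fst_head r (b :: t)
      rw [this] at hy
      simp at hy
      rwa [← hy]
    · exact isChain_singleton a

lemma splitRun_snd_sublist : ∀ p : List α, (splitRun r p).2 <+ p
  | [] => Sublist.refl _
  | [a] => Sublist.refl _
  | a :: b :: t => by
    rw [splitRun]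
    split
    · exact (splitRun_snd_sublist (b :: t)).cons a
    · exact Sublist.refl _

lemma splitRun_fst_sublist : ∀ p : List α, (splitRun r p).1 <+ p
  | [] => Sublist.refl _
  | [a] => Sublist.refl _
  | a :: b :: t => by
    rw [splitRun]
    split
    · exact (splitRun_fst_sublist (b :: t)).cons₂ a
    · simp

lemma splitRun_snd_not_rel : ∀ p : List α, ∀ x y t',
    (splitRun r p).2 = x :: y :: t' → ¬ r x y
  | [] => by intro x y t' h; simp [splitRun] at h
  | [a] => by intro x y t' h; simp [splitRun] at h
  | a :: b :: t => by
    intro x y t' h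
    rw [splitRun] at h
    split at h
    · exact splitRun_snd_not_rel (b :: t) x y t' h
    · rename_i hr
      obtain ⟨rfl, rfl, rfl⟩ : a = x ∧ b = y ∧ t = t' := by
        simpa using h
      exact hr

lemma splitRun_pedges : ∀ p : List α,
    pedges p = pedges (splitRun r p).1 ++ pedges (splitRun r p).2
  | [] => rfl
  | [a] => rfl
  | a :: b :: t => by
    rw [splitRun]
    split
    · rename_i hr
      have hh := splitRun_fst_head r (b :: t)
      have hne : (splitRun r (b :: t)).1 ≠ [] := by
        intro h; rw [h] at hh; simp at hh
      rw [pedges_cons_cons, pedges_cons a _ hne, splitRun_pedges (b :: t)]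
      have : (splitRun r (b :: t)).1.head hne = b := by
        have := List.head?_eq_head (l := (splitRun r (b :: t)).1) (h := hne)
        rw [hh] at this
        simpa using this.symm
      rw [this]
      rfl
    · rfl

lemma splitRun_snd_length_lt {a b : α} {t : List α} (hr : r a b) :
    (splitRun r (a :: b :: t)).2.length < (a :: b :: t).length := by
  rw [splitRun, if_pos hr]
  have := (splitRun_snd_sublist r (b :: t)).length_le
  simpa using Nat.lt_succ_of_le this

end Aux

section Graph

variable {n : ℕ}

def allP (n : ℕ) : List (Fin n × Fin n) :=
  (List.finRange n).flatMap fun u => (List.finRange n).map fun v => (u, v)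

def allPR (n : ℕ) : List (Fin n × Fin n) :=
  (List.finRange n).reverse.flatMap fun u => (List.finRange n).map fun v => (u, v)

def Fl (n : ℕ) : List (Fin n × Fin n) := (allP n).filter fun e => e.1 < e.2

def Bl (n : ℕ) : List (Fin n × Fin n) := (allPR n).filter fun e => e.2 < e.1

def rounds (n : ℕ) : ℕ → List (Fin n × Fin n)
  | 0 => []
  | m + 1 => Fl n ++ Bl n ++ rounds n m

lemma mem_allP (e : Fin n × Fin n) : e ∈ allP n := by
  refine List.mem_flatMap.2 ⟨e.1, List.mem_finRange _, ?_⟩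
  exact List.mem_map.2 ⟨e.2, List.mem_finRange _, rfl⟩

lemma mem_allPR (e : Fin n × Fin n) : e ∈ allPR n := by
  refine List.mem_flatMap.2 ⟨e.1, by simp [List.mem_finRange], ?_⟩
  exact List.mem_map.2 ⟨e.2, List.mem_finRange _, rfl⟩

/-- the lex-ish order for forward edges -/
def rF (e f : Fin n × Fin n) : Prop := e.1 < f.1 ∨ (e.1 = f.1 ∧ e.2 ≤ f.2)

/-- the lex-ish order for backward edges -/
def rB (e f : Fin n × Fin n) : Prop := f.1 < e.1 ∨ (e.1 = f.1 ∧ e.2 ≤ f.2)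

lemma rF_antisymm {e f : Fin n × Fin n} (h1 : rF e f) (h2 : rF f e) : e = f := by
  rcases h1 with h1 | ⟨h1, h1'⟩ <;> rcases h2 with h2 | ⟨h2, h2'⟩
  · exact absurd h2 (lt_asymm h1)
  · exact absurd h1 (by rw [h2]; exact lt_irrefl _)
  · exact absurd h2 (by rw [h1]; exact lt_irrefl _)
  · exact Prod.ext h1 (le_antisymm h1' h2')

lemma rB_antisymm {e f : Fin n × Fin n} (h1 : rB e f) (h2 : rB f e) : e = f := by
  rcases h1 with h1 | ⟨h1, h1'⟩ <;> rcases h2 with h2 | ⟨h2, h2'⟩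
  · exact absurd h2 (lt_asymm h1)
  · exact absurd h1 (by rw [h2]; exact lt_irrefl _)
  · exact absurd h2 (by rw [h1]; exact lt_irrefl _)
  · exact Prod.ext h1 (le_antisymm h1' h2')

lemma sorted_rF_allP : (allP n).Pairwise rF := by
  refine pairwise_bind' (q := (· < ·)) _ ?_ (List.pairwise_lt_finRange n) ?_
  · intro a _
    rw [List.pairwise_map]
    refine (List.pairwise_lt_finRange n).imp ?_
    intro x y hxy
    exact Or.inr ⟨rfl, le_of_lt hxy⟩
  · intro a b hab x hx y hy
    obtain ⟨v, _, rfl⟩ := List.mem_map.1 hx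
    obtain ⟨w, _, rfl⟩ := List.mem_map.1 hy
    exact Or.inl hab

lemma sorted_rB_allPR : (allPR n).Pairwise rB := by
  refine pairwise_bind' (q := (· > ·)) _ ?_ ?_ ?_
  · intro a _
    rw [List.pairwise_map]
    refine (List.pairwise_lt_finRange n).imp ?_
    intro x y hxy
    exact Or.inr ⟨rfl, le_of_lt hxy⟩
  · rw [List.pairwise_reverse]
    exact List.pairwise_lt_finRange n
  · intro a b hab x hx y hy
    obtain ⟨v, _, rfl⟩ := List.mem_map.1 hx
    obtain ⟨w, _, rfl⟩ := List.mem_map.1 hy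
    exact Or.inl hab

lemma sorted_rF_Fl : (Fl n).Pairwise rF :=
  sorted_rF_allP.sublist List.filter_sublist

lemma sorted_rB_Bl : (Bl n).Pairwise rB :=
  sorted_rB_allPR.sublist List.filter_sublist

lemma inc_sublist_Fl {p : List (Fin n)} (h : p.Chain' (· < ·)) :
    pedges p <+ Fl n := by
  haveI : Std.Antisymm (α := Fin n × Fin n) rF := ⟨fun _ _ => rF_antisymm⟩
  have hpw : p.Pairwise (· < ·) := isChain_iff_pairwise.1 h
  have hfst : (pedges p).Pairwise fun e f => e.1 < f.1 := pairwise_fst_pedges hpw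
  refine List.sublist_of_subperm_of_pairwise (r := rF) ?_ (hfst.imp fun h => Or.inl h) sorted_rF_Fl
  refine List.subperm_of_subset (hfst.imp ?_) ?_
  · intro e f hef
    intro hc; rw [hc] at hef; exact lt_irrefl _ hef
  · intro e he
    refine List.mem_filter.2 ⟨mem_allP e, ?_⟩
    simpa using chain'_rel_pedges h e he

lemma dec_sublist_Bl {p : List (Fin n)} (h : p.Chain' (· > ·)) :
    pedges p <+ Bl n := by
  haveI : Std.Antisymm (α := Fin n × Fin n) rB := ⟨fun _ _ => rB_antisymm⟩
  have hpw : p.Pairwise (· > ·) := isChain_iff_pairwise.1 h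
  have hfst : (pedges p).Pairwise fun e f => f.1 < e.1 := pairwise_fst_pedges hpw
  refine List.sublist_of_subperm_of_pairwise (r := rB) ?_ (hfst.imp fun h => Or.inl h) sorted_rB_Bl
  refine List.subperm_of_subset (hfst.imp ?_) ?_
  · intro e f hef
    intro hc; rw [hc] at hef; exact lt_irrefl _ hef
  · intro e he
    refine List.mem_filter.2 ⟨mem_allPR e, ?_⟩
    simpa using chain'_rel_pedges h e he

lemma Fl_sublist_rounds (m : ℕ) : Fl n <+ rounds n (m + 1) := by
  rw [rounds]
  exact (List.sublist_append_left _ _).trans (List.sublist_append_left _ _)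

/-- The key lemma: a nodup path starting increasing of length ≤ 2m+1 fits in m rounds. -/
lemma lemUp : ∀ m : ℕ, ∀ p : List (Fin n), p.Nodup → p.length ≤ 2 * m + 1 →
    (∀ x y t, p = x :: y :: t → x < y) → pedges p <+ rounds n m := by
  intro m
  induction m with
  | zero =>
    intro p _ hlen _
    rw [pedges_eq_nil (by omega)]
    exact nil_sublist _
  | succ m ih =>
    intro p hnd hlen hst
    match p, hnd, hlen, hst with
    | [], _, _, _ => exact nil_sublist _
    | [a], _, _, _ => exact nil_sublist _
    | a :: b :: t, hnd, hlen, hst =>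
      have hab : a < b := hst a b t rfl
      -- first split: increasing run
      obtain ⟨u, v, huv⟩ : ∃ u v, splitRun (· < ·) (a :: b :: t) = (u, v) := ⟨_, _, rfl⟩
      have hu_chain : u.Chain' (· < ·) := by
        have := splitRun_fst_chain' (· < ·) (a :: b :: t); rwa [huv] at this
      have hedges : pedges (a :: b :: t) = pedges u ++ pedges v := by
        have := splitRun_pedges (· < ·) (a :: b :: t); rwa [huv] at this
      have hv_sub : v <+ (a :: b :: t) := by
        have := splitRun_snd_sublist (· < ·) (a :: b :: t); rwa [huv] at this
      have hv_nd : v.Nodup := hnd.sublist hv_sub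
      have hv_len : v.length < (a :: b :: t).length := by
        have := splitRun_snd_length_lt (· < ·) hab (t := t)
        rwa [huv] at this
      have hu_F : pedges u <+ Fl n := inc_sublist_Fl hu_chain
      have hv_nr : ∀ x y t', v = x :: y :: t' → ¬ x < y := by
        intro x y t' hvxy
        have := splitRun_snd_not_rel (· < ·) (a :: b :: t) x y t'
        rw [huv] at this; exact this hvxy
      -- second split on v: decreasing run
      match v, hv_nd, hv_len, hv_nr with
      | [], _, _, _ =>
        rw [hedges]
        simpa using hu_F.trans (Fl_sublist_rounds m)
      | [c], _, _, _ =>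
        rw [hedges]
        simpa using hu_F.trans (Fl_sublist_rounds m)
      | c :: d :: t₂, hv_nd, hv_len, hv_nr =>
        have hcd : d < c := by
          have h1 : ¬ c < d := hv_nr c d t₂ rfl
          have h2 : c ≠ d := by
            intro hcc; rw [hcc] at hv_nd; simp at hv_nd
          exact lt_of_le_of_ne (not_lt.1 h1) (Ne.symm h2)
        obtain ⟨w, z, hwz⟩ : ∃ w z, splitRun (· > ·) (c :: d :: t₂) = (w, z) := ⟨_, _, rfl⟩
        have hw_chain : w.Chain' (· > ·) := by
          have := splitRun_fst_chain' (· > ·) (c :: d :: t₂); rwa [hwz] at this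
        have hedges2 : pedges (c :: d :: t₂) = pedges w ++ pedges z := by
          have := splitRun_pedges (· > ·) (c :: d :: t₂); rwa [hwz] at this
        have hz_sub : z <+ (c :: d :: t₂) := by
          have := splitRun_snd_sublist (· > ·) (c :: d :: t₂); rwa [hwz] at this
        have hz_nd : z.Nodup := hv_nd.sublist hz_sub
        have hz_len : z.length < (c :: d :: t₂).length := by
          have := splitRun_snd_length_lt (· > ·) hcd (t := t₂)
          rwa [hwz] at this
        have hz_st : ∀ x y t', z = x :: y :: t' → x < y := by
          intro x y t' hz
          have h1 : ¬ x > y := by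
            have := splitRun_snd_not_rel (· > ·) (c :: d :: t₂) x y t'
            rw [hwz] at this; exact this hz
          have h2 : x ≠ y := by
            have := hz_nd; rw [hz] at this; simp at this; tauto
          exact lt_of_le_of_ne (not_lt.1 h1) h2
        have hz_len' : z.length ≤ 2 * m + 1 := by
          simp only [List.length_cons] at *
          omega
        have ihz : pedges z <+ rounds n m := ih z hz_nd hz_len' hz_st
        have hw_B : pedges w <+ Bl n := dec_sublist_Bl hw_chain
        rw [hedges, hedges2, rounds, List.append_assoc]
        exact hu_F.append (hw_B.append ihz)

/-- Any nodup path of length ≤ 2m+2 fits in m+1 rounds. -/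
lemma lemAny (m : ℕ) (p : List (Fin n)) (hnd : p.Nodup) (hlen : p.length ≤ 2 * m + 2) :
    pedges p <+ rounds n (m + 1) := by
  match p, hnd, hlen with
  | [], _, _ => exact nil_sublist _
  | [a], _, _ => exact nil_sublist _
  | a :: b :: t, hnd, hlen =>
    rcases lt_or_gt_of_ne (show a ≠ b by intro h; rw [h] at hnd; simp at hnd) with hab | hab
    · -- starts increasing
      exact lemUp (m + 1) _ hnd (by omega) (by rintro x y t' ⟨rfl, rfl, rfl⟩; exact hab)
    · -- starts decreasing: strip decreasing run into Bl
      obtain ⟨w, z, hwz⟩ : ∃ w z, splitRun (· > ·) (a :: b :: t) = (w, z) := ⟨_, _, rfl⟩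
      have hw_chain : w.Chain' (· > ·) := by
        have := splitRun_fst_chain' (· > ·) (a :: b :: t); rwa [hwz] at this
      have hedges2 : pedges (a :: b :: t) = pedges w ++ pedges z := by
        have := splitRun_pedges (· > ·) (a :: b :: t); rwa [hwz] at this
      have hz_sub : z <+ (a :: b :: t) := by
        have := splitRun_snd_sublist (· > ·) (a :: b :: t); rwa [hwz] at this
      have hz_nd : z.Nodup := hnd.sublist hz_sub
      have hz_len : z.length < (a :: b :: t).length := by
        have := splitRun_snd_length_lt (· > ·) hab (t := t)
        rwa [hwz] at this
      have hz_st : ∀ x y t', z = x :: y :: t' → x < y := by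
        intro x y t' hz
        have h1 : ¬ x > y := by
          have := splitRun_snd_not_rel (· > ·) (a :: b :: t) x y t'
          rw [hwz] at this; exact this hz
        have h2 : x ≠ y := by
          have := hz_nd; rw [hz] at this; simp at this; tauto
        exact lt_of_le_of_ne (not_lt.1 h1) h2
      have ihz : pedges z <+ rounds n m := lemUp m z hz_nd (by omega) hz_st
      have hw_B : pedges w <+ Bl n := dec_sublist_Bl hw_chain
      rw [hedges2, rounds, List.append_assoc]
      exact ((hw_B.append ihz)).trans (List.sublist_append_right _ _)

lemma ne_of_mem_rounds (m : ℕ) : ∀ e ∈ rounds n m, e.1 ≠ e.2 := by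
  induction m with
  | zero => simp [rounds]
  | succ m ih =>
    intro e he
    rw [rounds] at he
    simp only [List.mem_append] at he
    rcases he with (he | he) | he
    · have := (List.mem_filter.1 he).2
      simp at this
      exact ne_of_lt this
    · have := (List.mem_filter.1 he).2
      simp at this
      exact (ne_of_lt this).symm
    · exact ih e he

lemma length_Fl_add_Bl : (Fl n).length + (Bl n).length ≤ n * n := by
  have hlen : (allP n).length = n * n := by
    have : (length ∘ fun u : Fin n => (List.finRange n).map fun v => (u, v)) = fun _ => n := by
      funext u; simp
    simp [allP, List.length_flatMap, this, List.map_const', List.sum_replicate, smul_eq_mul]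
  have hperm : allPR n ~ allP n := ((List.reverse_perm _).flatMap_right _)
  have hF : (Fl n).length = (allP n).countP fun e => decide (e.1 < e.2) := by
    simp [Fl, List.countP_eq_length_filter]
  have hB : (Bl n).length = (allP n).countP fun e => decide (e.2 < e.1) := by
    rw [Bl, ← hperm.countP_eq]
    simp [List.countP_eq_length_filter]
  have hmono : ((allP n).countP fun e => decide (e.2 < e.1)) ≤
      (allP n).countP fun a => decide ¬(decide (a.1 < a.2) = true) := by
    refine List.countP_mono_left ?_
    intro e _ h
    simp at h ⊢
    exact le_of_lt h
  have hsplit := List.length_eq_countP_add_countP (fun e => decide (e.1 < e.2)) (l := allP n)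
  omega

lemma length_rounds (m : ℕ) : (rounds n m).length ≤ m * (n * n) := by
  induction m with
  | zero => simp [rounds]
  | succ m ih =>
    rw [rounds]
    simp only [List.length_append]
    have := length_Fl_add_Bl (n := n)
    have : (Fl n).length + (Bl n).length + (rounds n m).length ≤ (m + 1) * (n * n) := by
      rw [add_mul, one_mul]
      omega
    omega

end Graph

/-- `S` is a valid relaxation sequence for the complete directed graph on vertex
type `α` with source `s`: `S` contains (as a subsequence, in order but not
necessarily contiguously) the edge sequence of every simple path starting at `s`. -/
def IsValidRelaxSeq {α : Type*} (s : α) (S : List (α × α)) : Prop :=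
  ∀ p : List α, p ≠ [] → p.head? = some s → p.Nodup → (p.zip p.tail).Sublist S

/-- Yen's improvement: for all sufficiently large `n` there is a valid relaxation
sequence for the complete directed graph on `n` vertices of length at most
`(1/2 + ε) n³`. -/
theorem stmt_12 (ε : ℝ) (hε : 0 < ε) :
    ∃ N : ℕ, ∀ n : ℕ, N ≤ n → ∀ s : Fin n,
      ∃ S : List (Fin n × Fin n), (∀ e ∈ S, e.1 ≠ e.2) ∧ IsValidRelaxSeq s S ∧
        (S.length : ℝ) ≤ ((1 / 2 : ℝ) + ε) * (n : ℝ) ^ 3 := by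
  refine ⟨⌈ε⁻¹⌉₊, fun n hn s => ?_⟩
  have hn1 : 1 ≤ n := Nat.one_le_iff_ne_zero.2 (by rintro rfl; exact s.elim0)
  refine ⟨rounds n (n / 2 + 1), ne_of_mem_rounds _, ?_, ?_⟩
  · intro p hne hhead hnd
    have hlen : p.length ≤ n := by
      simpa using hnd.length_le_card
    exact lemAny (n / 2) p hnd (by omega)
  · have h1 : (rounds n (n / 2 + 1)).length ≤ (n / 2 + 1) * (n * n) := length_rounds _
    have h2 : ((rounds n (n / 2 + 1)).length : ℝ) ≤ ((n / 2 + 1 : ℕ) : ℝ) * (n * n) := by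
      exact_mod_cast h1
    have h3 : ((n / 2 + 1 : ℕ) : ℝ) ≤ (n : ℝ) / 2 + 1 := by
      push_cast
      have : ((n / 2 : ℕ) : ℝ) ≤ (n : ℝ) / 2 := Nat.cast_div_le
      linarith
    have hnr : (1 : ℝ) ≤ n := by exact_mod_cast hn1
    have hinv : ε⁻¹ ≤ (n : ℝ) := by
      calc ε⁻¹ ≤ (⌈ε⁻¹⌉₊ : ℝ) := Nat.le_ceil _
        _ ≤ (n : ℝ) := by exact_mod_cast hn
    have hεn : 1 ≤ ε * n := by
      have := mul_le_mul_of_nonneg_left hinv (le_of_lt hε)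
      rwa [mul_inv_cancel₀ (ne_of_gt hε)] at this
    have h4 : (n : ℝ) * n ≤ ε * ((n : ℝ) ^ 3) := by
      have : (n:ℝ) * n * 1 ≤ (n:ℝ) * n * (ε * n) := by
        apply mul_le_mul_of_nonneg_left hεn (by positivity)
      calc (n:ℝ) * n = (n:ℝ) * n * 1 := by ring
        _ ≤ (n:ℝ) * n * (ε * n) := this
        _ = ε * (n:ℝ) ^ 3 := by ring
    calc ((rounds n (n / 2 + 1)).length : ℝ) ≤ ((n / 2 + 1 : ℕ) : ℝ) * ((n:ℝ) * n) := h2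
      _ ≤ ((n : ℝ) / 2 + 1) * ((n:ℝ) * n) := by
          apply mul_le_mul_of_nonneg_right h3 (by positivity)
      _ = (1 / 2 : ℝ) * (n:ℝ) ^ 3 + (n:ℝ) * n := by ring
      _ ≤ (1 / 2 : ℝ) * (n:ℝ) ^ 3 + ε * (n:ℝ) ^ 3 := by linarith
      _ = ((1 / 2 : ℝ) + ε) * (n : ℝ) ^ 3 := by ring
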